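/- Let G be a graph with a perfect matching, and let H_1, ..., H_k be the connected components of the cover graph of G (the spanning subgraph consisting of the edges of G contained in some perfect matching of G). Then G is cycle-conformal if and only if (1) each H_i is cycle-conformal, and (2) no edge of G outside all the H_i lies on an even cycle of G. -/

import Mathlib

open SimpleGraph

/-- A graph has a perfect matching. -/
def hasPM {V : Type*} (G : SimpleGraph V) : Prop :=
  ∃ M : G.Subgraph, M.IsPerfectMatching

/-- The graph obtained from `G` by deleting the vertices in `s`. -/
def delVerts {V : Type*} (G : SimpleGraph V) (s : Set V) : SimpleGraph ↥(sᶜ) :=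
  G.induce sᶜ

/-- A graph is cycle-conformal if it has a perfect matching and deleting the
vertex set of any even cycle leaves a graph with a perfect matching. -/
def cycleConformal {V : Type*} (G : SimpleGraph V) : Prop :=
  hasPM G ∧ ∀ (v : V) (c : G.Walk v v), c.IsCycle → Even c.length →
    hasPM (delVerts G {x | x ∈ c.support})

/-- The cover graph of `G`: the spanning subgraph whose edges are those edges
of `G` lying in some perfect matching of `G`. -/
def coverGraph {V : Type*} (G : SimpleGraph V) : SimpleGraph V where
  Adj a b := G.Adj a b ∧ ∃ M : G.Subgraph, M.IsPerfectMatching ∧ M.Adj a b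
  symm := ⟨fun a b h => ⟨h.1.symm, h.2.choose, h.2.choose_spec.1, h.2.choose_spec.2.symm⟩⟩
  loopless := ⟨fun a h => G.loopless.irrefl a h.1⟩

open SimpleGraph
namespace CCaux
variable {V : Type*} {G : SimpleGraph V}




lemma support_getLast? {u v : V} (p : G.Walk u v) :
    p.support.getLast? = some v := by
  induction p with
  | nil => rfl
  | cons h q ih =>
    rw [Walk.support_cons, q.support_eq_cons, List.getLast?_cons_cons,
      ← q.support_eq_cons]
    exact ih

lemma closed_support_tail_getLast {v : V} (c : G.Walk v v) (hc : ¬ c.Nil) :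
    ∃ hne : c.support.tail ≠ [], c.support.tail.getLast hne = v := by
  cases c with
  | nil => simp [Walk.Nil.nil] at hc
  | cons h q =>
    refine ⟨by simp [q.support_ne_nil], ?_⟩
    have h1 : q.support.getLast? = some v := support_getLast? q
    have h2 := List.getLast?_eq_getLast (l := q.support) (q.support_ne_nil)
    rw [h2] at h1
    simpa using h1

lemma closed_mem_support_tail {v : V} (c : G.Walk v v) (hc : ¬ c.Nil) :
    v ∈ c.support.tail := by
  obtain ⟨hne, hlast⟩ := closed_support_tail_getLast c hc
  have h2 := List.getLast_mem hne
  rwa [hlast] at h2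

lemma cyc_dropLast_facts {v : V} {c : G.Walk v v} (hc : c.IsCycle) :
    c.support.dropLast.Nodup ∧ (∀ x, x ∈ c.support.dropLast ↔ x ∈ c.support) := by
  have hnil : ¬ c.Nil := hc.not_nil
  obtain ⟨hne, hlast⟩ := closed_support_tail_getLast c hnil
  have htail : c.support.tail.dropLast ++ [v] = c.support.tail := by
    conv_rhs => rw [← List.dropLast_append_getLast hne]
    rw [hlast]
  have hnd : c.support.tail.Nodup := hc.support_nodup
  have hnd' : c.support.tail.dropLast.Nodup ∧ v ∉ c.support.tail.dropLast := by
    rw [← htail] at hnd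
    have := List.nodup_append'.mp hnd
    exact ⟨this.1, fun hv => (this.2.2 hv) (List.mem_singleton_self v)⟩
  have hdl : c.support.dropLast = v :: c.support.tail.dropLast := by
    conv_lhs => rw [c.support_eq_cons]
    exact List.dropLast_cons_of_ne_nil hne
  constructor
  · rw [hdl]
    exact List.nodup_cons.mpr ⟨hnd'.2, hnd'.1⟩
  · intro x
    rw [hdl, c.support_eq_cons]
    simp only [List.mem_cons]
    constructor
    · rintro (h | h)
      · exact Or.inl h
      · exact Or.inr (by rw [← htail]; exact List.mem_append_left _ h)
    · rintro (h | h)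
      · exact Or.inl h
      · rw [← htail] at h
        rcases List.mem_append.mp h with h' | h'
        · exact Or.inr h'
        · exact Or.inl (List.mem_singleton.mp h')

lemma IsCycle.reverse' {v : V} {c : G.Walk v v} (hc : c.IsCycle) :
    c.reverse.IsCycle := by
  have hnil : ¬ c.Nil := hc.not_nil
  refine ⟨⟨hc.isTrail.reverse, ?_⟩, ?_⟩
  · intro h
    have hlen : c.length = 0 := by simpa using congrArg Walk.length h
    exact hc.ne_nil ((Walk.nil_iff_length_eq.mpr hlen).eq_nil)
  · rw [Walk.support_reverse]
    have hsup : c.support = c.support.dropLast ++ [v] := by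
      have h1 : c.support.getLast? = some v := support_getLast? c
      have h2 := List.getLast?_eq_getLast (l := c.support) (c.support_ne_nil)
      rw [h2, Option.some_inj] at h1
      conv_lhs => rw [← List.dropLast_append_getLast c.support_ne_nil]
      rw [h1]
    rw [hsup, List.reverse_append]
    simp only [List.reverse_cons, List.reverse_nil, List.nil_append, List.singleton_append,
      List.tail_cons]
    rw [List.nodup_reverse]
    exact (cyc_dropLast_facts hc).1

lemma length_rotate' [DecidableEq V] {u v : V} (c : G.Walk v v) (h : u ∈ c.support) :
    (c.rotate u h).length = c.length := by
  have h1 := (Walk.rotate_edges c u h).perm.length_eq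
  rwa [Walk.length_edges, Walk.length_edges] at h1

lemma mem_support_rotate [DecidableEq V] {u v x : V} (c : G.Walk v v) (hnil : ¬ c.Nil)
    (h : u ∈ c.support) :
    x ∈ (c.rotate u h).support ↔ x ∈ c.support := by
  have hnil' : ¬ (c.rotate u h).Nil := by
    rw [Walk.nil_iff_length_eq, length_rotate']
    rwa [Walk.nil_iff_length_eq] at hnil
  have h1 : ∀ {w : V} (p : G.Walk w w), ¬ p.Nil → ∀ y, (y ∈ p.support ↔ y ∈ p.support.tail) := by
    intro w p hp y
    rw [p.support_eq_cons, List.mem_cons]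
    constructor
    · rintro (rfl | h)
      · exact closed_mem_support_tail p hp
      · exact h
    · exact fun h => Or.inr h
  rw [h1 _ hnil' x, h1 _ hnil x]
  exact (Walk.support_rotate c u h).perm.mem_iff



/-- Alternating matching along a walk: collect edges 0, 2, 4, ... -/
def walkM {u v : V} : G.Walk u v → G.Subgraph
  | Walk.nil => ⊥
  | Walk.cons h Walk.nil => G.subgraphOfAdj h
  | Walk.cons h (Walk.cons _ q) => G.subgraphOfAdj h ⊔ walkM q

lemma walkM_spec {u v : V} (p : G.Walk u v) (hev : Even p.length)
    (hnd : p.support.dropLast.Nodup) :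
    (walkM p).IsMatching ∧ (walkM p).verts = {x | x ∈ p.support.dropLast} := by
  match p with
  | Walk.nil =>
    constructor
    · intro x hx; simp [walkM] at hx
    · simp [walkM]
  | Walk.cons h Walk.nil => simp at hev
  | Walk.cons (v := x₁) h (Walk.cons (v := x₂) h' q) =>
    have hev' : Even q.length := by
      simp only [Walk.length_cons] at hev
      obtain ⟨k, hk⟩ := hev
      exact ⟨k - 1, by omega⟩
    have hdl : (Walk.cons h (Walk.cons h' q)).support.dropLast
        = u :: x₁ :: q.support.dropLast := by
      simp only [Walk.support_cons]
      rw [List.dropLast_cons_of_ne_nil (by simp [q.support_ne_nil]),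
        List.dropLast_cons_of_ne_nil q.support_ne_nil]
    rw [hdl] at hnd ⊢
    have hu : u ∉ x₁ :: q.support.dropLast := (List.nodup_cons.mp hnd).1
    have hnd1 := (List.nodup_cons.mp hnd).2
    have hx₁ : x₁ ∉ q.support.dropLast := (List.nodup_cons.mp hnd1).1
    have hndq : q.support.dropLast.Nodup := (List.nodup_cons.mp hnd1).2
    obtain ⟨ihm, ihv⟩ := walkM_spec q hev' hndq
    have hm1 : (G.subgraphOfAdj h).IsMatching := Subgraph.IsMatching.subgraphOfAdj h
    have hdisj : Disjoint (G.subgraphOfAdj h).support (walkM q).support := by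
      rw [hm1.support_eq_verts, ihm.support_eq_verts, ihv]
      simp only [subgraphOfAdj_verts]
      rw [Set.disjoint_left]
      rintro a (rfl | rfl)
      · exact fun ha => hu (List.mem_cons_of_mem _ ha)
      · exact fun ha => hx₁ ha
    constructor
    · exact hm1.sup ihm hdisj
    · show ((G.subgraphOfAdj h) ⊔ walkM q).verts = _
      rw [Subgraph.verts_sup, ihv]
      ext z
      simp [Set.ext_iff, or_assoc]

lemma walkM_cycle {v : V} {c : G.Walk v v} (hc : c.IsCycle) (hev : Even c.length) :
    (walkM c).IsMatching ∧ (walkM c).verts = {x | x ∈ c.support} := by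
  obtain ⟨hnd, hmem⟩ := cyc_dropLast_facts hc
  obtain ⟨hm, hv⟩ := walkM_spec c hev hnd
  refine ⟨hm, ?_⟩
  rw [hv]
  ext x
  exact hmem x

lemma walkM_adj_fst {u v x : V} (h : G.Adj u x) (q : G.Walk x v) (hq : ¬ q.Nil) :
    (walkM (Walk.cons h q)).Adj u x := by
  cases q with
  | nil => simp at hq
  | cons h' q' =>
    show ((G.subgraphOfAdj h) ⊔ walkM q').Adj u x
    exact Subgraph.sup_adj.mpr (Or.inl (by simp))

/-- Extend a matching on the complement of an even cycle to a perfect matching. -/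
lemma pmExtend {v : V} {c : G.Walk v v} (hc : c.IsCycle) (hev : Even c.length)
    {M : G.Subgraph} (hM : M.IsMatching) (hMv : M.verts = {x | x ∈ c.support}ᶜ) :
    (M ⊔ walkM c).IsPerfectMatching := by
  obtain ⟨hcm, hcv⟩ := walkM_cycle hc hev
  have hdisj : Disjoint M.support (walkM c).support := by
    rw [hM.support_eq_verts, hcm.support_eq_verts, hMv, hcv]
    exact disjoint_compl_left
  refine ⟨hM.sup hcm hdisj, ?_⟩
  intro x
  rw [Subgraph.verts_sup, hMv, hcv]
  by_cases hx : x ∈ c.support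
  · exact Set.mem_union_right _ hx
  · exact Set.mem_union_left _ hx

lemma path_first_edge {u v b : V} {p : G.Walk u v} (hp : p.IsPath)
    (he : s(u, b) ∈ p.edges) : ∃ (h : G.Adj u b) (q : G.Walk b v), p = Walk.cons h q := by
  cases p with
  | nil => simp at he
  | cons h' q =>
    rw [Walk.edges_cons, List.mem_cons] at he
    rcases he with he | he
    · rw [Sym2.eq_iff] at he
      rcases he with ⟨-, rfl⟩ | ⟨rfl, rfl⟩
      · exact ⟨h', q, rfl⟩
      · exact absurd rfl h'.ne
    · exact absurd (Walk.fst_mem_support_of_mem_edges q he)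
        ((Walk.cons_isPath_iff h' q).mp hp).2

/-- Reorient/rotate a cycle through edge `s(a,b)` so that it starts at `a`
and its first edge goes to `b`. -/
lemma orient_cycle [DecidableEq V] {a b u : V} (hab : G.Adj a b) {c : G.Walk u u}
    (hc : c.IsCycle) (hev : Even c.length) (he : s(a, b) ∈ c.edges) :
    ∃ (q : G.Walk b a), (Walk.cons hab q).IsCycle ∧ Even (Walk.cons hab q).length ∧ ¬ q.Nil := by
  have ha : a ∈ c.support := Walk.fst_mem_support_of_mem_edges c he
  set c₁ := c.rotate a ha with hc₁def
  have hc₁ : c₁.IsCycle := hc.rotate ha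
  have hlen₁ : c₁.length = c.length := length_rotate' c ha
  have hev₁ : Even c₁.length := hlen₁ ▸ hev
  have he₁ : s(a, b) ∈ c₁.edges := (Walk.rotate_edges c a ha).perm.mem_iff.mpr he
  clear_value c₁
  clear hc₁def he ha hc hev
  -- decompose c₁
  cases c₁ with
  | nil => exact absurd rfl hc₁.ne_nil
  | cons h₀ q₀ =>
    rename_i x₀
    have h3 := hc₁.three_le_length
    have hq₀len : 2 ≤ q₀.length := by
      simp only [Walk.length_cons] at h3; omega
    have hq₀ : q₀.IsPath := ((Walk.cons_isCycle_iff q₀ h₀).mp hc₁).1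
    rw [Walk.edges_cons, List.mem_cons] at he₁
    rcases he₁ with he₁ | he₁
    · -- first edge is s(a,b)
      rw [Sym2.eq_iff] at he₁
      rcases he₁ with ⟨-, rfl⟩ | ⟨rfl, rfl⟩
      · refine ⟨q₀, ?_, hev₁, ?_⟩
        · exact hc₁
        · rw [Walk.nil_iff_length_eq]; omega
      · exact absurd rfl hab.ne
    · -- the edge is elsewhere; reverse the cycle
      have he₂ : s(a, b) ∈ q₀.reverse.edges := by
        rw [Walk.edges_reverse, List.mem_reverse]
        exact Sym2.eq_swap ▸ he₁
      obtain ⟨hadj, r, hr⟩ := path_first_edge hq₀.reverse he₂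
      -- c₁.reverse = cons hadj (r.append (cons h₀.symm nil))
      have hrev : (Walk.cons h₀ q₀).reverse
          = Walk.cons hadj (r.append (Walk.cons h₀.symm Walk.nil)) := by
        rw [Walk.reverse_cons, hr]
        rfl
      have hcrev : (Walk.cons h₀ q₀).reverse.IsCycle := IsCycle.reverse' hc₁
      rw [hrev] at hcrev
      refine ⟨r.append (Walk.cons h₀.symm Walk.nil), hcrev, ?_, ?_⟩
      · have : (Walk.cons hadj (r.append (Walk.cons h₀.symm Walk.nil))).length
            = (Walk.cons h₀ q₀).length := by
          rw [← hrev, Walk.length_reverse]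
        rw [this]; exact hev₁
      · have h4 := hcrev.three_le_length
        rw [Walk.nil_iff_length_eq]
        simp only [Walk.length_cons] at h4
        omega

/-- Matchings with a prescribed vertex set. -/
def MV (G : SimpleGraph V) (t : Set V) : Prop :=
  ∃ M : G.Subgraph, M.IsMatching ∧ M.verts = t

lemma hasPM_induce_iff (G : SimpleGraph V) (t : Set V) :
    (∃ M : (G.induce t).Subgraph, M.IsPerfectMatching) ↔ MV G t := by
  constructor
  · rintro ⟨M, hM, hsp⟩
    refine ⟨⟨t, fun a b => ∃ (ha : a ∈ t) (hb : b ∈ t), M.Adj ⟨a, ha⟩ ⟨b, hb⟩,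
      ?_, ?_, ?_⟩, ?_, rfl⟩
    · rintro a b ⟨ha, hb, h⟩
      exact M.adj_sub h
    · rintro a b ⟨ha, hb, h⟩
      exact ha
    · constructor; rintro a b ⟨ha, hb, h⟩
      exact ⟨hb, ha, h.symm⟩
    · intro x hx
      obtain ⟨w, hw, huniq⟩ := hM (hsp ⟨x, hx⟩)
      refine ⟨(w : V), ⟨hx, w.2, hw⟩, ?_⟩
      rintro y ⟨hx', hy, h⟩
      exact Subtype.ext_iff.mp (huniq ⟨y, hy⟩ h)
  · rintro ⟨N, hN, rfl⟩
    refine ⟨⟨Set.univ, fun a b => N.Adj ↑a ↑b, fun {_ _} h => N.adj_sub h,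
      fun {_ _} _ => Set.mem_univ _, ⟨fun _ _ h => h.symm⟩⟩, ?_, fun _ => Set.mem_univ _⟩
    intro a _
    obtain ⟨w, hw, huniq⟩ := hN a.2
    refine ⟨⟨w, N.edge_vert hw.symm⟩, hw, ?_⟩
    rintro ⟨y, hy⟩ h
    exact Subtype.ext (huniq y h)

lemma MV_induce_iff {S : Set V} (G : SimpleGraph V) (t : Set ↥S) :
    MV (G.induce S) t ↔ MV G (Subtype.val '' t) := by
  constructor
  · rintro ⟨M, hM, rfl⟩
    refine ⟨⟨Subtype.val '' M.verts,
      fun a b => ∃ (ha : a ∈ S) (hb : b ∈ S), M.Adj ⟨a, ha⟩ ⟨b, hb⟩, ?_, ?_, ?_⟩, ?_, rfl⟩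
    · rintro a b ⟨ha, hb, h⟩
      exact M.adj_sub h
    · rintro a b ⟨ha, hb, h⟩
      exact ⟨⟨a, ha⟩, M.edge_vert h, rfl⟩
    · constructor; rintro a b ⟨ha, hb, h⟩
      exact ⟨hb, ha, h.symm⟩
    · rintro x ⟨⟨x', hx'⟩, hx, rfl⟩
      obtain ⟨w, hw, huniq⟩ := hM hx
      refine ⟨(w : V), ⟨hx', w.2, hw⟩, ?_⟩
      rintro y ⟨hx2, hy, h⟩
      exact Subtype.ext_iff.mp (huniq ⟨y, hy⟩ h)
  · rintro ⟨N, hN, hv⟩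
    have hsub : N.verts ⊆ S := by
      rw [hv]; rintro x ⟨y, hy, rfl⟩; exact y.2
    refine ⟨⟨{x : ↥S | ↑x ∈ N.verts}, fun a b => N.Adj ↑a ↑b, fun {_ _} h => N.adj_sub h,
      fun {_ _} h => N.edge_vert h, ⟨fun _ _ h => h.symm⟩⟩, ?_, ?_⟩
    · intro a ha
      obtain ⟨w, hw, huniq⟩ := hN ha
      refine ⟨⟨w, hsub (N.edge_vert hw.symm)⟩, hw, ?_⟩
      rintro ⟨y, hy⟩ h
      exact Subtype.ext (huniq y h)
    · ext x
      simp only [Set.mem_setOf_eq, hv]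
      exact ⟨fun ⟨y, hy, hxy⟩ => Subtype.ext hxy ▸ hy, fun h => ⟨x, h, rfl⟩⟩

/-- Restrict a matching to a set closed under adjacency in a supergraph
containing all the matching edges. -/
lemma matching_restrict {M : G.Subgraph} (hM : M.IsMatching) {H : SimpleGraph V}
    (hedge : ∀ a b, M.Adj a b → H.Adj a b) {S : Set V}
    (hS : ∀ a b, H.Adj a b → (a ∈ S ↔ b ∈ S)) :
    ∃ N : G.Subgraph, N.IsMatching ∧ N.verts = M.verts ∩ S ∧
      ∀ a b, N.Adj a b → M.Adj a b := by
  refine ⟨⟨M.verts ∩ S, fun a b => M.Adj a b ∧ a ∈ S ∧ b ∈ S,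
    fun {_ _} h => M.adj_sub h.1, fun {_ _} h => ⟨M.edge_vert h.1, h.2.1⟩,
    ⟨fun _ _ h => ⟨h.1.symm, h.2.2, h.2.1⟩⟩⟩, ?_, rfl, fun a b h => h.1⟩
  rintro x ⟨hxM, hxS⟩
  obtain ⟨w, hw, huniq⟩ := hM hxM
  refine ⟨w, ⟨hw, hxS, (hS x w (hedge _ _ hw)).mp hxS⟩, ?_⟩
  rintro y ⟨h, -, -⟩
  exact huniq y h

/-- Transfer a matching to another graph containing all its edges. -/
lemma matching_copy {M : G.Subgraph} (hM : M.IsMatching) {H : SimpleGraph V}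
    (hedge : ∀ a b, M.Adj a b → H.Adj a b) :
    ∃ N : H.Subgraph, N.IsMatching ∧ N.verts = M.verts ∧
      ∀ a b, N.Adj a b ↔ M.Adj a b := by
  exact ⟨⟨M.verts, M.Adj, fun {a b} h => hedge a b h, fun {_ _} h => M.edge_vert h,
    ⟨fun _ _ h => h.symm⟩⟩, hM, rfl, fun a b => Iff.rfl⟩

/-- Lift a walk whose support lies in `S` to the induced subgraph on `S`. -/
def liftWalk {S : Set V} : {x y : V} → (p : G.Walk x y) → (∀ z ∈ p.support, z ∈ S) →
    (hx : x ∈ S) → (hy : y ∈ S) → (G.induce S).Walk ⟨x, hx⟩ ⟨y, hy⟩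
  | _, _, Walk.nil, _, _, _ => Walk.nil
  | _, _, Walk.cons h q, hp, hx, hy =>
      Walk.cons (by exact h)
        (liftWalk q (fun z hz => hp z (by simp [hz])) (hp _ (by simp)) hy)

lemma liftWalk_map {S : Set V} {x y : V} (p : G.Walk x y) (hp : ∀ z ∈ p.support, z ∈ S)
    (hx : x ∈ S) (hy : y ∈ S) :
    (liftWalk p hp hx hy).map (SimpleGraph.Embedding.induce S).toHom = p := by
  induction p with
  | nil => rfl
  | cons h q ih =>
    show Walk.cons _ _ = _
    rw [ih]; rfl
end CCaux

/-- A graph `G` with a perfect matching is cycle-conformal iff (1) each connected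
component of its cover graph (as an induced subgraph) is cycle-conformal, and
(2) no edge of `G` outside the cover graph lies on an even cycle of `G`. -/
theorem cycleConformal_iff_components (V : Type*) (G : SimpleGraph V)
    (hpm : hasPM G) :
    cycleConformal G ↔
      ((∀ c : (coverGraph G).ConnectedComponent,
          cycleConformal ((coverGraph G).induce
            {v | (coverGraph G).connectedComponentMk v = c})) ∧
       (∀ a b : V, G.Adj a b → ¬ (coverGraph G).Adj a b →
          ¬ ∃ (u : V) (w : G.Walk u u), w.IsCycle ∧ Even w.length ∧
            s(a, b) ∈ w.edges)) := by
  classical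
  set CG := coverGraph G with hCGdef
  have hle : CG ≤ G := fun a b h => h.1
  have hclose : ∀ (comp : CG.ConnectedComponent) (a b : V), CG.Adj a b →
      (CG.connectedComponentMk a = comp ↔ CG.connectedComponentMk b = comp) := by
    intro comp a b h
    have hmk : CG.connectedComponentMk a = CG.connectedComponentMk b :=
      ConnectedComponent.sound ⟨Walk.cons h Walk.nil⟩
    rw [hmk]
  have hpmcov : ∀ (M : G.Subgraph), M.IsPerfectMatching → ∀ a b, M.Adj a b → CG.Adj a b :=
    fun M hM a b h => ⟨M.adj_sub h, M, hM, h⟩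
  constructor
  · intro hG
    have h2 : ∀ a b : V, G.Adj a b → ¬ CG.Adj a b →
        ¬ ∃ (u : V) (w : G.Walk u u), w.IsCycle ∧ Even w.length ∧ s(a, b) ∈ w.edges := by
      rintro a b hab hncov ⟨u, w, hc, hev, hedge⟩
      obtain ⟨q, hq, hqev, hqnil⟩ := CCaux.orient_cycle hab hc hev hedge
      obtain ⟨M, hM, hMv⟩ :=
        (CCaux.hasPM_induce_iff G _).mp (hG.2 a (Walk.cons hab q) hq hqev)
      have hpm' := CCaux.pmExtend hq hqev hM hMv
      exact hncov ⟨hab, _, hpm',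
        Subgraph.sup_adj.mpr (Or.inr (CCaux.walkM_adj_fst hab q hqnil))⟩
    refine ⟨?_, h2⟩
    intro comp
    constructor
    · -- the component has a perfect matching
      obtain ⟨M₀, hM₀⟩ := hpm
      obtain ⟨N, hN, hNv, hNadj⟩ := CCaux.matching_restrict hM₀.1
        (fun a b h => hpmcov _ hM₀ a b h) (hclose comp)
      obtain ⟨N', hN', hN'v, -⟩ := CCaux.matching_copy hN
        (fun a b h => hpmcov _ hM₀ a b (hNadj a b h))
      refine (CCaux.hasPM_induce_iff CG _).mpr ⟨N', hN', ?_⟩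
      rw [hN'v, hNv, Subgraph.isSpanning_iff.mp hM₀.2]
      exact Set.univ_inter _
    · -- even cycles in the component are conformal
      intro v c hc hcev
      set f := (Hom.ofLE hle).comp
        (SimpleGraph.Embedding.induce
          (G := CG) {v | CG.connectedComponentMk v = comp}).toHom with hfdef
      have hfinj : Function.Injective f := fun a b h => Subtype.ext h
      have hmc : (c.map f).IsCycle := (Walk.map_isCycle_iff_of_injective hfinj).mpr hc
      have hmcev : Even (c.map f).length := by rwa [Walk.length_map]
      obtain ⟨M, hM, hMv⟩ := (CCaux.hasPM_induce_iff G _).mp (hG.2 _ (c.map f) hmc hmcev)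
      have hpm' := CCaux.pmExtend hmc hmcev hM hMv
      obtain ⟨N, hN, hNv, hNadj⟩ := CCaux.matching_restrict hM
        (fun a b h => hpmcov _ hpm' a b (Subgraph.sup_adj.mpr (Or.inl h))) (hclose comp)
      obtain ⟨N', hN', hN'v, -⟩ := CCaux.matching_copy hN
        (fun a b h => hpmcov _ hpm' a b (Subgraph.sup_adj.mpr (Or.inl (hNadj a b h))))
      refine (CCaux.hasPM_induce_iff (CG.induce _) _).mpr
        ((CCaux.MV_induce_iff CG _).mpr ⟨N', hN', ?_⟩)
      rw [hN'v, hNv, hMv]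
      ext z
      simp only [Set.mem_inter_iff, Set.mem_compl_iff, Set.mem_setOf_eq, Set.mem_image]
      constructor
      · rintro ⟨hz1, hz2⟩
        refine ⟨⟨z, hz2⟩, fun hmem => hz1 ?_, rfl⟩
        rw [Walk.support_map]
        exact List.mem_map.mpr ⟨⟨z, hz2⟩, hmem, rfl⟩
      · rintro ⟨w, hw, rfl⟩
        refine ⟨fun hmem => ?_, w.2⟩
        rw [Walk.support_map] at hmem
        obtain ⟨w', hw', hww⟩ := List.mem_map.mp hmem
        rw [Subtype.ext hww] at hw'
        exact hw hw'
  · rintro ⟨h1, h2⟩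
    refine ⟨hpm, ?_⟩
    intro v c hc hcev
    have hcov : ∀ e ∈ c.edges, e ∈ CG.edgeSet := by
      intro e
      induction e using Sym2.ind with
      | _ x y =>
        intro he
        have hadj : G.Adj x y := c.adj_of_mem_edges he
        by_contra hncov
        exact h2 x y hadj (fun h => hncov (CG.mem_edgeSet.mpr h)) ⟨v, c, hc, hcev, he⟩
    set pc := c.transfer CG hcov with hpcdef
    have hpc : pc.IsCycle := hc.transfer hcov
    have hpcsup : pc.support = c.support := Walk.support_transfer c hcov
    set comp := CG.connectedComponentMk v with hcompdef
    set S := {x | CG.connectedComponentMk x = comp} with hSdef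
    have hvS : v ∈ S := rfl
    have hsub : ∀ z ∈ pc.support, z ∈ S := by
      intro z hz
      exact (ConnectedComponent.sound ⟨(pc.takeUntil z hz).reverse⟩ :
        CG.connectedComponentMk z = CG.connectedComponentMk v)
    set q := CCaux.liftWalk pc hsub hvS hvS with hqdef
    have hemb : Function.Injective
        (SimpleGraph.Embedding.induce (G := CG) S).toHom := fun a b h => Subtype.ext h
    have hqmap : q.map (SimpleGraph.Embedding.induce (G := CG) S).toHom = pc :=
      CCaux.liftWalk_map pc hsub hvS hvS
    have hq : q.IsCycle := (Walk.map_isCycle_iff_of_injective hemb).mp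
      (by rw [hqmap]; exact hpc)
    have hqlen : q.length = c.length := by
      have h3 : (q.map (SimpleGraph.Embedding.induce (G := CG) S).toHom).length
          = pc.length := by rw [hqmap]; rfl
      rw [Walk.length_map] at h3
      rw [h3, hpcdef, Walk.length_transfer]
    have hqev : Even q.length := by rw [hqlen]; exact hcev
    have hPMq := (h1 comp).2 ⟨v, hvS⟩ q hq hqev
    obtain ⟨Nq, hNq, hNqv⟩ := (CCaux.MV_induce_iff CG _).mp
      ((CCaux.hasPM_induce_iff (CG.induce S) _).mp hPMq)
    obtain ⟨MS, hMS, hMSv, -⟩ := CCaux.matching_copy hNq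
      (fun a b h => hle (Nq.adj_sub h))
    have hmemq : ∀ z : V, z ∈ c.support ↔ ∃ w : ↥S, w ∈ q.support ∧ ↑w = z := by
      intro z
      rw [← hpcsup, ← hqmap]; erw [Walk.support_map]
      constructor
      · intro hz
        obtain ⟨w, hw, hww⟩ := List.mem_map.mp hz
        exact ⟨w, hw, hww⟩
      · rintro ⟨w, hw, rfl⟩
        exact List.mem_map.mpr ⟨w, hw, rfl⟩
    have hMSv' : MS.verts = S ∩ {z | z ∈ c.support}ᶜ := by
      rw [hMSv, hNqv]
      ext z
      simp only [Set.mem_image, Set.mem_inter_iff, Set.mem_compl_iff, Set.mem_setOf_eq]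
      constructor
      · rintro ⟨w, hw, rfl⟩
        refine ⟨w.2, fun hz => hw ?_⟩
        obtain ⟨w', hw', hww⟩ := (hmemq ↑w).mp hz
        rwa [Subtype.ext hww] at hw'
      · rintro ⟨hzS, hz⟩
        exact ⟨⟨z, hzS⟩, fun hmem => hz ((hmemq z).mpr ⟨⟨z, hzS⟩, hmem, rfl⟩), rfl⟩
    have hcomps : ∀ d : CG.ConnectedComponent, ∃ M : G.Subgraph, M.IsMatching ∧
        M.verts = (if d = comp then S ∩ {z | z ∈ c.support}ᶜ
          else {x | CG.connectedComponentMk x = d}) := by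
      intro d
      by_cases hd : d = comp
      · subst hd
        rw [if_pos rfl]
        exact ⟨MS, hMS, hMSv'⟩
      · rw [if_neg hd]
        obtain ⟨Nd, hNd, hNdv⟩ := (CCaux.hasPM_induce_iff CG _).mp (h1 d).1
        obtain ⟨Md, hMd, hMdv, -⟩ := CCaux.matching_copy hNd
          (fun a b h => hle (Nd.adj_sub h))
        exact ⟨Md, hMd, by rw [hMdv, hNdv]⟩
    choose F hFm hFv using hcomps
    have hFsub : ∀ d, (F d).verts ⊆ {x | CG.connectedComponentMk x = d} := by
      intro d x hx
      rw [hFv d] at hx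
      split_ifs at hx with hd
      · subst hd; exact hx.1
      · exact hx
    have hiM : (⨆ d, F d).IsMatching := by
      refine Subgraph.IsMatching.iSup hFm ?_
      intro i j hij
      rw [(hFm i).support_eq_verts, (hFm j).support_eq_verts, Set.disjoint_left]
      intro x hxi hxj
      exact hij ((hFsub i hxi).symm.trans (hFsub j hxj))
    have hiV : (⨆ d, F d).verts = {x | x ∈ c.support}ᶜ := by
      rw [Subgraph.verts_iSup]
      ext x
      simp only [Set.mem_iUnion, Set.mem_compl_iff, Set.mem_setOf_eq]
      constructor
      · rintro ⟨d, hd⟩ hxc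
        have hxd := hFsub d hd
        rw [hFv d] at hd
        split_ifs at hd with hcase
        · exact hd.2 hxc
        · apply hcase
          have hxS : x ∈ S := hsub x (by rwa [hpcsup])
          exact hxd.symm.trans hxS
      · intro hx
        by_cases hxc : CG.connectedComponentMk x = comp
        · exact ⟨comp, by rw [hFv comp, if_pos rfl]; exact ⟨hxc, hx⟩⟩
        · exact ⟨CG.connectedComponentMk x, by
            rw [hFv _, if_neg hxc]; exact Set.mem_setOf_eq ▸ rfl⟩
    exact (CCaux.hasPM_induce_iff G _).mpr ⟨_, hiM, hiV⟩
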